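/- arXiv:1204.3057 — 2 statements merged into one kernel-verified Lean document; each statement's English description precedes it below -/
import Mathlib

section
/- Let q be a prime power, r = 2s+1 odd, and a ∈ F_{q^r}. Then for all x,y ∈ F_{q^r}: Tr(ax)·Tr(ay) = Tr(a^2·xy) + Σ_{j=1}^{s} Tr(a^{1+q^j}·(x y^{q^j} + x^{q^j} y)), where Tr is the trace from F_{q^r} to F_q. -/
open Finset

-- periodicity of Frobenius powers
private lemma auxMod {q r : ℕ} {L : Type*} [Field L] [Fintype L]
    (hL : Fintype.card L = q ^ r) (z : L) (m : ℕ) :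
    z ^ q ^ m = z ^ q ^ (m % r) := by
  conv_lhs => rw [← Nat.mod_add_div m r]
  rw [pow_add, pow_mul, pow_mul]
  rw [← hL]
  exact FiniteField.pow_card_pow _ _

private lemma sumShift {M : Type*} [AddCommMonoid M] {r : ℕ} (hr : 0 < r) (g : ℕ → M)
    (hg : ∀ m, g m = g (m % r)) (j : ℕ) :
    ∑ i ∈ range r, g (i + j) = ∑ i ∈ range r, g i := by
  haveI : NeZero r := ⟨hr.ne'⟩
  rw [← Fin.sum_univ_eq_sum_range (fun i => g (i + j)), ← Fin.sum_univ_eq_sum_range g]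
  rw [← Equiv.sum_comp (Equiv.addRight (Fin.ofNat r j)) (fun i : Fin r => g i)]
  refine Finset.sum_congr rfl fun i _ => ?_
  simp only [Equiv.coe_addRight]
  rw [hg (↑i + j)]
  congr 1
  rw [Fin.add_def, Fin.val_ofNat, Nat.add_mod i.1 j, Nat.mod_eq_of_lt i.2]

private lemma traceFormula (q : ℕ) (K L : Type*) [Field K] [Fintype K] [Field L] [Fintype L]
    [Algebra K L] [FiniteDimensional K L] (hq : Fintype.card K = q) (u : L) :
    algebraMap K L (Algebra.trace K L u) =
      ∑ i ∈ range (Module.finrank K L), u ^ q ^ i := by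
  set r := Module.finrank K L with hrdef
  have hr : 0 < r := Module.finrank_pos
  have hL : Fintype.card L = q ^ r := by rw [← hq]; exact Module.card_eq_pow_finrank
  obtain ⟨p, hp⟩ := CharP.exists K
  haveI : CharP K p := hp
  haveI : CharP L p := charP_of_injective_algebraMap (algebraMap K L).injective p
  obtain ⟨n, hpn, hcard⟩ := FiniteField.card K p
  haveI : Fact p.Prime := ⟨hpn⟩
  -- the Frobenius x ↦ x ^ q as an AlgEquiv
  have hq' : q = p ^ (n : ℕ) := by rw [← hq, hcard]
  let f : L →ₐ[K] L :=
    { toRingHom := iterateFrobenius L p n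
      commutes' := fun k => by
        simp [iterateFrobenius_def, ← map_pow, ← hq', hq ▸ FiniteField.pow_card k] }
  have hf : ∀ z : L, f z = z ^ q := fun z => by simp [f, iterateFrobenius_def, hq']
  let φ : L ≃ₐ[K] L := AlgEquiv.ofBijective f
    ((Finite.injective_iff_bijective).mp (f.toRingHom.injective))
  have hφ : ∀ (i : ℕ) (z : L), (φ ^ i) z = z ^ q ^ i := by
    intro i
    induction i with
    | zero => simp
    | succ i ih =>
      intro z
      rw [pow_succ', AlgEquiv.mul_apply, ih, AlgEquiv.coe_ofBijective, hf, ← pow_mul,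
        ← pow_succ]
  -- injectivity of i ↦ φ ^ i on range r
  classical
  have hinj : ∀ i < r, ∀ j < r, φ ^ i = φ ^ j → i = j := by
    intro i hi j hj hij
    by_contra hne
    wlog hlt : i < j generalizing i j
    · exact this j hj i hi hij.symm (Ne.symm hne) (by omega)
    have hone : φ ^ (j - i) = 1 := by
      have h2 : φ ^ i * φ ^ (j - i) = φ ^ i * 1 := by
        rw [mul_one, ← pow_add, Nat.add_sub_cancel' hlt.le, hij]
      exact mul_left_cancel h2
    -- every element is a root of X^(q^(j-i)) - X
    have hroot : ∀ z : L, z ^ q ^ (j - i) = z := by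
      intro z
      have := congrArg (fun σ : L ≃ₐ[K] L => σ z) hone
      simpa [hφ] using this
    have hq1 : 1 < q := hq ▸ Fintype.one_lt_card
    set P : Polynomial L := Polynomial.X ^ q ^ (j - i) - Polynomial.X with hP
    have hdeg : P.natDegree = q ^ (j - i) := by
      have h1 : (Polynomial.X : Polynomial L).natDegree <
          (Polynomial.X ^ q ^ (j - i) : Polynomial L).natDegree := by
        rw [Polynomial.natDegree_X_pow, Polynomial.natDegree_X]
        exact Nat.one_lt_pow (by omega) hq1
      rw [hP, Polynomial.natDegree_sub_eq_left_of_natDegree_lt h1, Polynomial.natDegree_X_pow]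
    have hP0 : P ≠ 0 := by
      intro h
      rw [h, Polynomial.natDegree_zero] at hdeg
      exact (pow_pos (by omega : 0 < q) (j - i)).ne' hdeg.symm
    have hsub : (Finset.univ : Finset L) ⊆ P.roots.toFinset := by
      intro z _
      rw [Multiset.mem_toFinset, Polynomial.mem_roots hP0]
      simp [hP, Polynomial.IsRoot, hroot z]
    have hcontra : Fintype.card L ≤ q ^ (j - i) := by
      calc Fintype.card L = (Finset.univ : Finset L).card := (Finset.card_univ).symm
        _ ≤ P.roots.toFinset.card := Finset.card_le_card hsub
        _ ≤ Multiset.card P.roots := Multiset.toFinset_card_le _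
        _ ≤ P.natDegree := Polynomial.card_roots' P
        _ = q ^ (j - i) := hdeg
    rw [hL] at hcontra
    exact absurd hcontra (not_le.mpr (Nat.pow_lt_pow_right hq1 (by omega)))
  -- the powers of φ enumerate the Galois group
  have hcardGal : Fintype.card (L ≃ₐ[K] L) = r := by rw [← Nat.card_eq_fintype_card]; exact IsGalois.card_aut_eq_finrank K L
  have hbij : Function.Bijective (fun i : Fin r => φ ^ (i : ℕ)) := by
    rw [Fintype.bijective_iff_injective_and_card]
    refine ⟨fun i j hij => ?_, by simp [hcardGal]⟩
    exact Fin.ext (hinj _ i.2 _ j.2 hij)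
  rw [trace_eq_sum_automorphisms, ← Fin.sum_univ_eq_sum_range (fun i => u ^ q ^ i) r]
  rw [← Function.Bijective.sum_comp hbij (fun σ => σ u)]
  exact Finset.sum_congr rfl fun i _ => hφ i u

/-- for an odd-degree extension `F_{q^{2s+1}}/F_q` with trace `Tr`
and any `a`, `Tr(ax)·Tr(ay) = Tr(a²xy) + Σ_{j=1}^{s} Tr(a^{1+q^j}(xy^{q^j}+x^{q^j}y))`. -/
theorem stmt2 (q s : ℕ) (K L : Type*) [Field K] [Fintype K] [Field L] [Algebra K L]
    [FiniteDimensional K L] (hq : Fintype.card K = q)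
    (hr : Module.finrank K L = 2 * s + 1) (a x y : L) :
    Algebra.trace K L (a * x) * Algebra.trace K L (a * y) =
      Algebra.trace K L (a ^ 2 * (x * y)) +
        ∑ j ∈ Finset.Icc 1 s,
          Algebra.trace K L (a ^ (1 + q ^ j) * (x * y ^ q ^ j + x ^ q ^ j * y)) := by
  classical
  haveI : Finite L := Module.finite_of_finite K
  haveI : Fintype L := Fintype.ofFinite L
  set r := 2 * s + 1 with hrdef
  have hL : Fintype.card L = q ^ r := by rw [← hq, ← hr]; exact Module.card_eq_pow_finrank
  have hrpos : 0 < r := by omega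
  apply (algebraMap K L).injective
  have tf : ∀ u : L, algebraMap K L (Algebra.trace K L u) = ∑ i ∈ range r, u ^ q ^ i :=
    fun u => by rw [traceFormula q K L hq u, hr]
  rw [map_mul, map_add, map_sum, tf, tf, tf]
  simp_rw [tf]
  set T : L → L := fun u => ∑ i ∈ range r, u ^ q ^ i with hT
  -- Frobenius invariance of T
  have hper : ∀ (u : L) (m : ℕ), u ^ q ^ m = u ^ q ^ (m % r) := fun u m => auxMod hL u m
  have hfr : ∀ z : L, z ^ q ^ r = z := fun z => by
    rw [hper z r, Nat.mod_self, pow_zero, pow_one]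
  have Tfrob : ∀ (u : L) (j : ℕ), T (u ^ q ^ j) = T u := by
    intro u j
    have : ∀ i, (u ^ q ^ j) ^ q ^ i = u ^ q ^ (i + j) := fun i => by
      rw [← pow_mul, ← pow_add, Nat.add_comm j i]
    calc T (u ^ q ^ j) = ∑ i ∈ range r, u ^ q ^ (i + j) :=
          Finset.sum_congr rfl fun i _ => this i
      _ = T u := sumShift hrpos (fun m => u ^ q ^ m) (fun m => hper u m) j
  have Tadd : ∀ u v : L, T (u + v) = T u + T v := fun u v => by
    simp only [hT]
    rw [← tf, ← tf, ← tf, ← map_add, map_add]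
  -- step 1: diagonal decomposition of the product of traces
  have hterm : ∀ k i : ℕ, (a ^ (1 + q ^ k) * (x * y ^ q ^ k)) ^ q ^ i
      = (a * x) ^ q ^ i * (a * y) ^ q ^ (k + i) := by
    intro k i
    rw [pow_add q k i]
    ring
  have step1 : (∑ i ∈ range r, (a * x) ^ q ^ i) * ∑ i ∈ range r, (a * y) ^ q ^ i
      = ∑ k ∈ range r, T (a ^ (1 + q ^ k) * (x * y ^ q ^ k)) := by
    calc (∑ i ∈ range r, (a * x) ^ q ^ i) * ∑ i ∈ range r, (a * y) ^ q ^ i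
        = ∑ i ∈ range r, ∑ k ∈ range r, (a * x) ^ q ^ i * (a * y) ^ q ^ (k + i) := by
          rw [Finset.sum_mul]
          refine Finset.sum_congr rfl fun i _ => ?_
          rw [← sumShift hrpos (fun m => (a * y) ^ q ^ m) (fun m => hper _ m) i,
            Finset.mul_sum]
      _ = ∑ k ∈ range r, ∑ i ∈ range r, (a * x) ^ q ^ i * (a * y) ^ q ^ (k + i) :=
          Finset.sum_comm
      _ = ∑ k ∈ range r, T (a ^ (1 + q ^ k) * (x * y ^ q ^ k)) :=
          Finset.sum_congr rfl fun k _ => Finset.sum_congr rfl fun i _ => (hterm k i).symm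
  -- step 2: swapping a term via Frobenius
  have hswap : ∀ k, 1 ≤ k → k ≤ 2 * s →
      T (a ^ (1 + q ^ k) * (x * y ^ q ^ k))
        = T (a ^ (1 + q ^ (r - k)) * (x ^ q ^ (r - k) * y)) := by
    intro k hk1 hk2
    set m := r - k with hm
    have hkm : q ^ k * q ^ m = q ^ r := by rw [← pow_add]; congr 1; omega
    rw [← Tfrob (a ^ (1 + q ^ k) * (x * y ^ q ^ k)) m]
    congr 1
    have expand : (a ^ (1 + q ^ k) * (x * y ^ q ^ k)) ^ q ^ m
        = a ^ q ^ m * (a ^ (q ^ k * q ^ m) * (x ^ q ^ m * y ^ (q ^ k * q ^ m))) := by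
      ring
    rw [expand, hkm, hfr a, hfr y]
    ring
  rw [step1]
  rw [hrdef, Finset.sum_range_succ']
  have hF0 : T (a ^ (1 + q ^ 0) * (x * y ^ q ^ 0)) = T (a ^ 2 * (x * y)) := by
    norm_num
  rw [hF0]
  have hsplit : ∑ k ∈ range (2 * s), T (a ^ (1 + q ^ (k + 1)) * (x * y ^ q ^ (k + 1)))
      = ∑ k ∈ range s, T (a ^ (1 + q ^ (k + 1)) * (x * y ^ q ^ (k + 1)))
        + ∑ k ∈ range s, T (a ^ (1 + q ^ (s - k)) * (x ^ q ^ (s - k) * y)) := by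
    rw [two_mul, Finset.sum_range_add]
    congr 1
    refine Finset.sum_congr rfl fun k hk => ?_
    rw [Finset.mem_range] at hk
    have h1 : r - (s + k + 1) = s - k := by omega
    rw [hswap (s + k + 1) (by omega) (by omega), h1]
  rw [hsplit]
  have hrefl : ∑ k ∈ range s, T (a ^ (1 + q ^ (s - k)) * (x ^ q ^ (s - k) * y))
      = ∑ k ∈ range s, T (a ^ (1 + q ^ (k + 1)) * (x ^ q ^ (k + 1) * y)) := by
    rw [← Finset.sum_range_reflect (fun k => T (a ^ (1 + q ^ (k + 1)) * (x ^ q ^ (k + 1) * y))) s]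
    refine Finset.sum_congr rfl fun k hk => ?_
    rw [Finset.mem_range] at hk
    have : s - 1 - k + 1 = s - k := by omega
    rw [this]
  rw [hrefl, ← Finset.sum_add_distrib]
  have hIcc : ∑ j ∈ Finset.Icc 1 s, T (a ^ (1 + q ^ j) * (x * y ^ q ^ j + x ^ q ^ j * y))
      = ∑ k ∈ range s, T (a ^ (1 + q ^ (k + 1)) * (x * y ^ q ^ (k + 1) + x ^ q ^ (k + 1) * y)) := by
    rw [← Finset.Ico_add_one_right_eq_Icc, Finset.sum_Ico_eq_sum_range]
    simp [Nat.add_comm]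
  rw [hIcc]
  rw [add_comm (∑ k ∈ range s, _) _]
  congr 1
  refine Finset.sum_congr rfl fun k _ => ?_
  rw [mul_add, Tadd]
end

section
/- Let C ⊆ K^n be a nonzero linear code over a finite field K. Then for every t ≥ 1, dim(C^⟨t+1⟩) ≥ dim(C^⟨t⟩). -/
/-- Span of the set of coordinatewise products of a codeword of `C` and one of `D`. -/
def mulSpan {K ι : Type*} [Field K] (C D : Submodule K (ι → K)) :
    Submodule K (ι → K) :=
  Submodule.span K {x | ∃ c ∈ C, ∃ d ∈ D, x = c * d}

/-- The `t`-th power `C^⟨t⟩` of a linear code `C`: the span of coordinatewise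
products of `t` codewords of `C` (with `C^⟨0⟩` the repetition code). -/
def codePow {K ι : Type*} [Field K] (C : Submodule K (ι → K)) : ℕ → Submodule K (ι → K)
  | 0 => Submodule.span K {(1 : ι → K)}
  | t + 1 => mulSpan (codePow C t) C

/-- Vectors whose first `j` coordinates vanish. -/
def zlow (K : Type*) [Field K] (n j : ℕ) : Submodule K (Fin n → K) where
  carrier := {v | ∀ i : Fin n, (i : ℕ) < j → v i = 0}
  add_mem' := by
    intro a b ha hb i hi
    simp [Pi.add_apply, ha i hi, hb i hi]
  zero_mem' := by intro i hi; rfl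
  smul_mem' := by
    intro r a ha i hi
    simp [Pi.smul_apply, ha i hi]

lemma zlow_mono {K : Type*} [Field K] {n : ℕ} {j j' : ℕ} (h : j ≤ j') :
    zlow K n j' ≤ zlow K n j := by
  intro v hv i hi
  exact hv i (lt_of_lt_of_le hi h)

lemma key {K : Type*} [Field K] {n : ℕ} (A B C : Submodule K (Fin n → K))
    (hmul : ∀ c ∈ C, ∀ v ∈ A, c * v ∈ B)
    (hsupp : ∀ v ∈ A, ∀ j : Fin n, v j ≠ 0 → ∃ c ∈ C, c j ≠ 0) :
    Module.finrank K A ≤ Module.finrank K B := by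
  have main : ∀ k : ℕ,
      Module.finrank K ↥(A ⊓ zlow K n (n - k)) ≤ Module.finrank K ↥(B ⊓ zlow K n (n - k)) := by
    intro k
    induction k with
    | zero =>
      have hbot : A ⊓ zlow K n (n - 0) = ⊥ := by
        rw [eq_bot_iff]
        rintro v ⟨hvA, hvz⟩
        have : v = 0 := funext fun i => hvz i (by simpa using i.isLt)
        simp [this, Submodule.mem_bot]
      rw [hbot]
      simp
    | succ k ih =>
      rcases le_or_gt n k with hk | hk
      · have : n - (k + 1) = n - k := by omega
        rw [this]; exact ih
      · -- j := n - (k+1) < n, and n - k = j + 1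
        set j : ℕ := n - (k + 1) with hjdef
        have hjn : j < n := by omega
        have hnk : n - k = j + 1 := by omega
        rw [hnk] at ih
        set jF : Fin n := ⟨j, hjn⟩ with hjF
        set Aj := A ⊓ zlow K n j with hAj
        set Aj1 := A ⊓ zlow K n (j + 1) with hAj1
        set Bj := B ⊓ zlow K n j with hBj
        set Bj1 := B ⊓ zlow K n (j + 1) with hBj1
        have hAle : Aj1 ≤ Aj := inf_le_inf_left A (zlow_mono (Nat.le_succ j))
        have hBle : Bj1 ≤ Bj := inf_le_inf_left B (zlow_mono (Nat.le_succ j))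
        -- membership characterization for going from zlow j to zlow (j+1)
        have step_mem : ∀ v : Fin n → K, v ∈ zlow K n j → v jF = 0 → v ∈ zlow K n (j + 1) := by
          intro v hv hvj i hi
          rcases lt_or_eq_of_le (Nat.lt_succ_iff.mp hi) with h | h
          · exact hv i h
          · have : i = jF := Fin.ext h
            rw [this]; exact hvj
        by_cases hc : ∃ c ∈ C, c jF ≠ 0
        · obtain ⟨c, hcC, hcj⟩ := hc
          -- multiplication by c as a linear map Aj → Bj
          have hmem : ∀ v : Fin n → K, v ∈ Aj → c * v ∈ Bj := by
            rintro v ⟨hvA, hvz⟩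
            refine ⟨hmul c hcC v hvA, fun i hi => ?_⟩
            simp [Pi.mul_apply, hvz i hi]
          let φ : ↥Aj →ₗ[K] ↥Bj :=
            { toFun := fun v => ⟨c * v.1, hmem v.1 v.2⟩
              map_add' := by intro x y; ext i; simp [mul_add]
              map_smul' := by intro r x; ext i; simp [Pi.mul_apply]; ring }
          set A' : Submodule K ↥Aj := Submodule.comap Aj.subtype Aj1 with hA'
          set B' : Submodule K ↥Bj := Submodule.comap Bj.subtype Bj1 with hB'
          let ψ : ↥Aj →ₗ[K] (↥Bj ⧸ B') := B'.mkQ.comp φ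
          have hker : LinearMap.ker ψ = A' := by
            rw [show ψ = B'.mkQ.comp φ from rfl, LinearMap.ker_comp, Submodule.ker_mkQ]
            ext v
            simp only [Submodule.mem_comap, hA', hB', Submodule.subtype_apply]
            change (c * v.1 ∈ Bj1) ↔ v.1 ∈ Aj1
            constructor
            · rintro hφ1
              have hvj : v.1 jF = 0 := by
                have h0 : (c * v.1) jF = 0 := hφ1.2 jF (Nat.lt_succ_self j)
                have : c jF * v.1 jF = 0 := h0
                rcases mul_eq_zero.mp this with h | h
                · exact absurd h hcj
                · exact h
              exact ⟨v.2.1, step_mem v.1 v.2.2 hvj⟩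
            · rintro ⟨hvA, hvz⟩
              refine ⟨hmul c hcC v.1 hvA, fun i hi => ?_⟩
              simp [Pi.mul_apply, hvz i hi]
          -- dimension bookkeeping
          have eA : Module.finrank K ↥A' = Module.finrank K ↥Aj1 :=
            LinearEquiv.finrank_eq (Submodule.comapSubtypeEquivOfLe hAle)
          have eB : Module.finrank K ↥B' = Module.finrank K ↥Bj1 :=
            LinearEquiv.finrank_eq (Submodule.comapSubtypeEquivOfLe hBle)
          have hq : Module.finrank K (↥Aj ⧸ A') ≤ Module.finrank K (↥Bj ⧸ B') := by
            rw [← hker]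
            calc Module.finrank K (↥Aj ⧸ LinearMap.ker ψ)
                = Module.finrank K ↥(LinearMap.range ψ) :=
                  LinearEquiv.finrank_eq ψ.quotKerEquivRange
              _ ≤ Module.finrank K (↥Bj ⧸ B') := Submodule.finrank_le _
          have hA'' := Submodule.finrank_quotient_add_finrank A'
          have hB'' := Submodule.finrank_quotient_add_finrank B'
          rw [eA] at hA''
          rw [eB] at hB''
          calc Module.finrank K ↥Aj
              = Module.finrank K (↥Aj ⧸ A') + Module.finrank K ↥Aj1 := hA''.symm
            _ ≤ Module.finrank K (↥Bj ⧸ B') + Module.finrank K ↥Bj1 := Nat.add_le_add hq ih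
            _ = Module.finrank K ↥Bj := hB''
        · push_neg at hc
          have hAzero : ∀ v ∈ A, v jF = 0 := by
            intro v hv
            by_contra h
            obtain ⟨c, hcC, hcj⟩ := hsupp v hv jF h
            exact hcj (hc c hcC)
          have hAeq : Aj = Aj1 := by
            apply le_antisymm
            · rintro v ⟨hvA, hvz⟩
              exact ⟨hvA, step_mem v hvz (hAzero v hvA)⟩
            · exact hAle
          calc Module.finrank K ↥Aj = Module.finrank K ↥Aj1 := by rw [hAeq]
            _ ≤ Module.finrank K ↥Bj1 := ih
            _ ≤ Module.finrank K ↥Bj := Submodule.finrank_mono hBle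
  have h := main n
  have h0 : n - n = 0 := Nat.sub_self n
  rw [h0] at h
  have htop : zlow K n 0 = ⊤ := by
    rw [eq_top_iff]
    intro v _ i hi
    omega
  rw [htop, inf_top_eq, inf_top_eq] at h
  exact h

/-- for a nonzero linear code `C`, `dim C^⟨t+1⟩ ≥ dim C^⟨t⟩` for all `t ≥ 1`. -/
theorem stmt7 (K : Type*) [Field K] [Finite K] (n : ℕ)
    (C : Submodule K (Fin n → K)) (hC : C ≠ ⊥) (t : ℕ) (ht : 1 ≤ t) :
    Module.finrank K (codePow C t) ≤ Module.finrank K (codePow C (t + 1)) := by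
  obtain ⟨t', rfl⟩ : ∃ t', t = t' + 1 := ⟨t - 1, by omega⟩
  apply key (codePow C (t' + 1)) (codePow C (t' + 1 + 1)) C
  · intro c hc v hv
    show c * v ∈ mulSpan (codePow C (t' + 1)) C
    exact Submodule.subset_span ⟨v, hv, c, hc, mul_comm c v⟩
  · intro v hv j hvj
    have hv' : v ∈ mulSpan (codePow C t') C := hv
    revert hvj
    refine Submodule.span_induction ?_ ?_ ?_ ?_ hv'
    · rintro x ⟨a, _, c, hcC, rfl⟩ hx
      refine ⟨c, hcC, fun h => hx ?_⟩
      simp [Pi.mul_apply, h]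
    · intro h; exact absurd rfl h
    · intro x y _ _ hx hy hxy
      by_cases h : x j = 0
      · have : y j ≠ 0 := fun hy0 => hxy (by simp [Pi.add_apply, h, hy0])
        exact hy this
      · exact hx h
    · intro r x _ hx hrx
      refine hx fun h => hrx ?_
      simp [Pi.smul_apply, h]
end
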